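/- Let G be a finite abelian group of order n, let m ≤ n be a positive integer, and suppose d is an odd divisor of n with d ≥ 2m + 1. Then ρ±(G, m, 2) ≤ d − 1. -/

import Mathlib

open Finset Pointwise

/-- The `h`-fold sumset of a finite subset `A` of an abelian group:
`hA = {Σ λ_a • a : λ : A → ℕ, Σ λ_a = h}`. -/
def foldSumset {G : Type*} [AddCommGroup G] (h : ℕ) (A : Finset G) : Set G :=
  {g | ∃ c : G → ℕ, (∑ a ∈ A, c a) = h ∧ (∑ a ∈ A, c a • a) = g}

/-- The `h`-fold signed sumset of a finite subset `A` of an abelian group: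
`h±A = {Σ λ_a • a : λ : A → ℤ, Σ |λ_a| = h}`. -/
def foldSignedSumset {G : Type*} [AddCommGroup G] (h : ℕ) (A : Finset G) : Set G :=
  {g | ∃ c : G → ℤ, (∑ a ∈ A, (c a).natAbs) = h ∧ (∑ a ∈ A, c a • a) = g}

/-- `ρ(G, m, h) = min {|hA| : A ⊆ G, |A| = m}`. -/
noncomputable def rho (G : Type*) [AddCommGroup G] (m h : ℕ) : ℕ :=
  sInf {k | ∃ A : Finset G, A.card = m ∧ (foldSumset h A).ncard = k}

/-- `ρ±(G, m, h) = min {|h±A| : A ⊆ G, |A| = m}`. -/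
noncomputable def rhoPM (G : Type*) [AddCommGroup G] (m h : ℕ) : ℕ :=
  sInf {k | ∃ A : Finset G, A.card = m ∧ (foldSignedSumset h A).ncard = k}

/-- `f_d(m, h) = (h⌈m/d⌉ - h + 1) d`. -/
def fdmh (d m h : ℕ) : ℕ := (h * ((m + d - 1) / d) - h + 1) * d

/-- `u(n, m, h) = min {f_d(m, h) : d a positive divisor of n}`. -/
noncomputable def uFun (n m h : ℕ) : ℕ :=
  sInf {k | ∃ d : ℕ, 0 < d ∧ d ∣ n ∧ k = fdmh d m h}

/-- Every finite abelian group has an additive subgroup of each order dividing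
the group order. -/
lemma my_exists_addSubgroup_of_dvd :
    ∀ (d : ℕ) (G : Type*) [AddCommGroup G] [Finite G],
      d ∣ Nat.card G → ∃ H : AddSubgroup G, Nat.card H = d := by
  intro d
  induction d using Nat.strong_induction_on with
  | _ d ih =>
    intro G _ _ hdvd
    rcases eq_or_ne d 1 with rfl | hd1
    · exact ⟨⊥, by simp⟩
    have hd0 : d ≠ 0 := by
      rintro rfl
      exact absurd (Nat.eq_zero_of_zero_dvd hdvd) Nat.card_pos.ne'
    have hp : d.minFac.Prime := Nat.minFac_prime hd1
    haveI : Fact d.minFac.Prime := ⟨hp⟩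
    obtain ⟨x, hx⟩ := exists_prime_addOrderOf_dvd_card' (G := G) d.minFac
      ((d.minFac_dvd).trans hdvd)
    set Z := AddSubgroup.zmultiples x with hZdef
    have hZ : Nat.card Z = d.minFac := by rw [Nat.card_zmultiples, hx]
    have hcard : Nat.card G = Nat.card (G ⧸ Z) * d.minFac := by
      rw [← hZ]; exact AddSubgroup.card_eq_card_quotient_mul_card_addSubgroup Z
    have hdvd' : d / d.minFac ∣ Nat.card (G ⧸ Z) := by
      obtain ⟨k, hk⟩ := hdvd
      rw [hcard] at hk
      have hd : d = d.minFac * (d / d.minFac) := (Nat.mul_div_cancel' d.minFac_dvd).symm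
      refine ⟨k, ?_⟩
      have := hk
      rw [hd] at this
      have hpos : 0 < d.minFac := hp.pos
      nlinarith [this]
    obtain ⟨K, hK⟩ := ih (d / d.minFac)
      (Nat.div_lt_self (Nat.pos_of_ne_zero hd0) hp.one_lt) (G ⧸ Z) hdvd'
    refine ⟨K.comap (QuotientAddGroup.mk' Z), ?_⟩
    have hset : (K.comap (QuotientAddGroup.mk' Z) : Set G)
        = QuotientAddGroup.mk ⁻¹' (K : Set (G ⧸ Z)) := rfl
    have h1 : Nat.card (K.comap (QuotientAddGroup.mk' Z))
        = Nat.card (QuotientAddGroup.mk ⁻¹' (K : Set (G ⧸ Z))) := by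
      rw [← hset]; rfl
    rw [h1, Nat.card_congr (QuotientAddGroup.preimageMkEquivAddSubgroupProdSet Z _),
      Nat.card_prod, hZ]
    have h2 : Nat.card (K : Set (G ⧸ Z)) = d / d.minFac := by
      rw [← hK]; rfl
    rw [h2, Nat.mul_div_cancel' d.minFac_dvd]

/-- From a symmetric, 2-torsion-free finite set of size at least `2m` one can select
`m` elements with no two being negatives of each other. -/
lemma my_exists_asym {G : Type*} [AddCommGroup G] [DecidableEq G] :
    ∀ (m : ℕ) (S : Finset G), (∀ x ∈ S, -x ∈ S) → (∀ x ∈ S, x ≠ -x) →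
      2 * m ≤ S.card → ∃ A : Finset G, A.card = m ∧ A ⊆ S ∧ ∀ a ∈ A, -a ∉ A := by
  intro m
  induction m with
  | zero => exact fun S _ _ _ => ⟨∅, by simp⟩
  | succ m ih =>
    intro S hneg hne hcard
    obtain ⟨x, hxS⟩ : S.Nonempty := card_pos.mp (by omega)
    set S' := S \ {x, -x} with hS'def
    have hxS' : x ∉ S' := by simp [hS'def]
    have hnxS' : -x ∉ S' := by simp [hS'def]
    have hsub : S' ⊆ S := sdiff_subset
    have hneg' : ∀ y ∈ S', -y ∈ S' := by
      intro y hy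
      simp only [hS'def, mem_sdiff, mem_insert, mem_singleton, not_or] at hy ⊢
      refine ⟨hneg y hy.1, ?_, ?_⟩
      · intro h; exact hy.2.2 (by rw [← h, neg_neg])
      · intro h; exact hy.2.1 (by rw [← neg_neg y, h, neg_neg])
    have hcard' : 2 * m ≤ S'.card := by
      have h1 : S ⊆ S' ∪ {x, -x} := by
        intro y hy
        by_cases hy' : y ∈ ({x, -x} : Finset G)
        · exact mem_union_right _ hy'
        · exact mem_union_left _ (mem_sdiff.mpr ⟨hy, hy'⟩)
      have h2 := card_le_card h1
      have h3 := card_union_le S' ({x, -x} : Finset G)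
      have h4 : ({x, -x} : Finset G).card ≤ 2 := card_insert_le _ _ |>.trans (by simp)
      omega
    obtain ⟨A', hA'card, hA'sub, hA'⟩ := ih S' hneg' (fun y hy => hne y (hsub hy)) hcard'
    refine ⟨insert x A', ?_, ?_, ?_⟩
    · rw [card_insert_of_notMem (fun h => hxS' (hA'sub h)), hA'card]
    · exact insert_subset hxS (hA'sub.trans hsub)
    · intro a ha
      rcases mem_insert.mp ha with rfl | haA'
      · intro h
        rcases mem_insert.mp h with h' | h'
        · exact hne a hxS h'.symm
        · exact hnxS' (hA'sub h')
      · intro h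
        rcases mem_insert.mp h with h' | h'
        · have ha' : a = -x := by rw [← h', neg_neg]
          exact hnxS' (ha' ▸ hA'sub haA')
        · exact hA' a haA' h'

/-- if `d` is an odd divisor of `|G|` with `d ≥ 2m + 1`, then
`ρ±(G, m, 2) ≤ d - 1`. -/
theorem rhoPM_le_of_odd_divisor (G : Type*) [AddCommGroup G] [Fintype G]
    (m d : ℕ) (hm : 0 < m) (hmn : m ≤ Fintype.card G)
    (hodd : Odd d) (hdvd : d ∣ Fintype.card G) (hdm : 2 * m + 1 ≤ d) :
    rhoPM G m 2 ≤ d - 1 := by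
  classical
  obtain ⟨H, hH⟩ := my_exists_addSubgroup_of_dvd d G
    (by rw [Nat.card_eq_fintype_card]; exact hdvd)
  have hd2 : ¬ (2 ∣ d) := by
    rcases hodd with ⟨k, hk⟩; omega
  -- the set H \ {0} as a Finset
  have hfin : ((H : Set G) \ {0}).Finite := Set.toFinite _
  set S : Finset G := hfin.toFinset with hSdef
  have hmemS : ∀ y : G, y ∈ S ↔ y ∈ H ∧ y ≠ 0 := by
    intro y
    rw [hSdef, Set.Finite.mem_toFinset]
    simp
  have hneg : ∀ y ∈ S, -y ∈ S := by
    intro y hy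
    rw [hmemS] at hy ⊢
    exact ⟨H.neg_mem hy.1, neg_ne_zero.mpr hy.2⟩
  have hne2 : ∀ y ∈ S, y ≠ -y := by
    intro y hy h
    rw [hmemS] at hy
    have hyy : y + y = 0 := by nth_rewrite 2 [h]; simp
    have h2 : addOrderOf y ∣ 2 :=
      addOrderOf_dvd_of_nsmul_eq_zero (by rw [two_nsmul]; exact hyy)
    have hdy : addOrderOf y ∣ d := by
      have h3 : addOrderOf (⟨y, hy.1⟩ : H) ∣ Nat.card H := addOrderOf_dvd_natCard _
      rwa [AddSubgroup.addOrderOf_mk, hH] at h3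
    have h4 : addOrderOf y = 1 ∨ addOrderOf y = 2 :=
      (Nat.dvd_prime Nat.prime_two).mp h2
    rcases h4 with h4 | h4
    · exact hy.2 (AddMonoid.addOrderOf_eq_one_iff.mp h4)
    · exact hd2 (h4 ▸ hdy)
  -- the cardinality of S is d - 1
  have hncard : ((H : Set G) \ {0}).ncard = d - 1 := by
    rw [Set.ncard_diff_singleton_of_mem H.zero_mem]
    have h3 : (H : Set G).ncard = d := by
      rw [← Nat.card_coe_set_eq]; exact hH
    rw [h3]
  have hScard : S.card = d - 1 := by
    rw [hSdef, ← Set.ncard_eq_toFinset_card _ hfin, hncard]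
  -- choose the set A
  obtain ⟨A, hAcard, hAS, hAasym⟩ := my_exists_asym m S hneg hne2 (by omega)
  -- the signed sumset is contained in H \ {0}
  have hsub : foldSignedSumset 2 A ⊆ (H : Set G) \ {0} := by
    rintro g ⟨c, hc2, rfl⟩
    have hmemH : ∀ a ∈ A, a ∈ H := fun a ha => ((hmemS a).mp (hAS ha)).1
    constructor
    · exact H.sum_mem (fun a ha => H.zsmul_mem (hmemH a ha) _)
    · -- the sum is nonzero
      intro hg0
      simp only [Set.mem_singleton_iff] at hg0
      set T := A.filter (fun a => c a ≠ 0) with hTdef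
      have hTA : T ⊆ A := filter_subset _ _
      have hTsum : ∑ a ∈ T, (c a).natAbs = 2 := by
        rw [hTdef, Finset.sum_filter_of_ne (fun x _ hx => Int.natAbs_ne_zero.mp hx), hc2]
      have hTsum2 : ∑ a ∈ T, c a • a = 0 := by
        rw [hTdef, Finset.sum_filter_of_ne
          (fun x _ hx => by rintro h; rw [h] at hx; simp at hx), hg0]
      have hT1 : ∀ a ∈ T, 1 ≤ (c a).natAbs := by
        intro a ha
        have := (mem_filter.mp ha).2
        omega
      have hTcard : T.card ≤ 2 := by
        have := Finset.card_nsmul_le_sum T (fun a => (c a).natAbs) 1 hT1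
        simpa [hTsum] using this
      interval_cases h : T.card
      · rw [Finset.card_eq_zero.mp h] at hTsum
        simp at hTsum
      · obtain ⟨a, ha⟩ := Finset.card_eq_one.mp h
        rw [ha, Finset.sum_singleton] at hTsum hTsum2
        have haA : a ∈ A := hTA (ha ▸ mem_singleton_self a)
        have haS := hAS haA
        have haa : a + a = 0 := by
          rcases Int.natAbs_eq_iff.mp hTsum with hca | hca <;> rw [hca] at hTsum2
          · rw [show ((2 : ℕ) : ℤ) = 2 from rfl, two_zsmul] at hTsum2
            exact hTsum2
          · rw [show -((2 : ℕ) : ℤ) = -2 from rfl, neg_zsmul, neg_eq_zero, two_zsmul] at hTsum2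
            exact hTsum2
        exact hne2 a haS (eq_neg_of_add_eq_zero_left haa)
      · obtain ⟨a, b, hab, hT⟩ := Finset.card_eq_two.mp h
        have haT : a ∈ T := by rw [hT]; simp
        have hbT : b ∈ T := by rw [hT]; simp
        have haA : a ∈ A := hTA haT
        have hbA : b ∈ A := hTA hbT
        rw [hT, Finset.sum_pair hab] at hTsum hTsum2
        have hca : (c a).natAbs = 1 := by
          have := hT1 a haT; have := hT1 b hbT
          omega
        have hcb : (c b).natAbs = 1 := by
          have := hT1 a haT; have := hT1 b hbT
          omega
        have hb : b = -a ∨ b = a := by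
          rcases Int.natAbs_eq_iff.mp hca with h1 | h1 <;>
            rcases Int.natAbs_eq_iff.mp hcb with h2 | h2 <;>
            rw [h1, h2] at hTsum2 <;>
            rw [show ((1 : ℕ) : ℤ) = 1 from rfl] at hTsum2
          · rw [one_zsmul, one_zsmul] at hTsum2
            exact Or.inl (eq_neg_of_add_eq_zero_right hTsum2)
          · rw [one_zsmul, neg_zsmul, one_zsmul, ← sub_eq_add_neg] at hTsum2
            exact Or.inr (sub_eq_zero.mp hTsum2).symm
          · rw [one_zsmul, neg_zsmul, one_zsmul, add_comm, ← sub_eq_add_neg] at hTsum2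
            exact Or.inr (sub_eq_zero.mp hTsum2)
          · rw [neg_zsmul, neg_zsmul, one_zsmul, one_zsmul, ← neg_add, neg_eq_zero] at hTsum2
            exact Or.inl (eq_neg_of_add_eq_zero_right hTsum2)
        rcases hb with hb | hb
        · exact hAasym a haA (hb ▸ hbA)
        · exact hab (hb.symm)
  -- conclude
  have hle : rhoPM G m 2 ≤ (foldSignedSumset 2 A).ncard :=
    Nat.sInf_le ⟨A, hAcard, rfl⟩
  have hle2 : (foldSignedSumset 2 A).ncard ≤ ((H : Set G) \ {0}).ncard :=
    Set.ncard_le_ncard hsub hfin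
  omega
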